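/- arXiv:1812.02434 — 2 statements merged into one kernel-verified Lean document; each statement's English description precedes it below -/
import Mathlib

section
/- Let p/q be an irreducible fraction with 0 < p/q < 1, p/q = [a_1,…,a_n], a_1 ≥ 2, so that AT((q−p)/q) is the mirror image of AT(p/q) (the mirror correspondence exchanges the two bottom vertices 0/1 and 1/1 and matches the new vertex of the i-th triangle of one ancestral triangle with the new vertex of the i-th triangle of the other). Then the vertex of AT((q−p)/q) corresponding to a vertex of AT(p/q) labeled r/s is labeled (s−r)/s. -/
/-!
Ancestral triangles of continued fractions (Yamada / Farey diagrams),
following "Cluster variables and Alexander polynomials of 2-bridge knots".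
-/

noncomputable section

open scoped BigOperators

attribute [local instance] Classical.propDecidable

namespace TwoBridge

/-- The continued fraction `[a₁,…,aₙ] = 1/(a₁ + 1/(a₂ + ⋯ + 1/aₙ))`. -/
def cf : List ℕ → ℚ
  | [] => 0
  | a :: t => 1 / ((a : ℚ) + cf t)

/-- Partial sums `l_k = a₁ + ⋯ + a_k`. -/
def ell (a : List ℕ) (k : ℕ) : ℕ := (a.take k).sum

/-- The index of the fan containing the `i`-th triangle (1-based): the least `k` with
`i ≤ l_k − 1`.  Fan 1 consists of `T_1, …, T_{a₁−1}` and, for `k ≥ 2`, fan `k` consists of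
`T_{l_{k−1}}, …, T_{l_k − 1}`. -/
def fanIdx (a : List ℕ) (i : ℕ) : ℕ := sInf {k | i < ell a k}

/-- The `i`-th triangle (1-based) of the ancestral triangle of `[a₁,…,aₙ]` is a *right*
triangle iff it lies in an odd-indexed fan (first `a₁ − 1` triangles are right, the next
`a₂` left, the next `a₃` right, and so on alternately). -/
def isRight (a : List ℕ) (i : ℕ) : Prop := Odd (fanIdx a i)

/-- Vertex indices of the ancestral triangle: `0 ↦ 0/1`, `1 ↦ 1/1`, and `j + 1 ↦` the apex
(new vertex) of the triangle `T_j`.  `edgeIdx a i` is the pair of vertex indices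
(left endpoint, right endpoint) of the most recently created edge after stacking `i`
triangles; the triangle `T_{i+1}` is stacked on this edge. -/
def edgeIdx (a : List ℕ) : ℕ → ℕ × ℕ
  | 0 => (0, 1)
  | i + 1 => if isRight a (i + 1) then ((edgeIdx a i).1, i + 2) else (i + 2, (edgeIdx a i).2)

/-- The labels (numerator, denominator) of the endpoints of the active edge after stacking
`i` triangles; the new vertex of each triangle is labelled by the mediant of the two
endpoints of the edge it is stacked on. -/
def edgeLbl (a : List ℕ) : ℕ → (ℕ × ℕ) × (ℕ × ℕ)
  | 0 => ((0, 1), (1, 1))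
  | i + 1 =>
      if isRight a (i + 1) then
        ((edgeLbl a i).1,
          ((edgeLbl a i).1.1 + (edgeLbl a i).2.1, (edgeLbl a i).1.2 + (edgeLbl a i).2.2))
      else
        (((edgeLbl a i).1.1 + (edgeLbl a i).2.1, (edgeLbl a i).1.2 + (edgeLbl a i).2.2),
          (edgeLbl a i).2)

/-- The label (numerator, denominator) of the vertex with index `v`. -/
def vtxLabel (a : List ℕ) (v : ℕ) : ℕ × ℕ :=
  if v = 0 then (0, 1)
  else if v = 1 then (1, 1)
  else ((edgeLbl a (v - 2)).1.1 + (edgeLbl a (v - 2)).2.1,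
        (edgeLbl a (v - 2)).1.2 + (edgeLbl a (v - 2)).2.2)

/-- `u` and `w` are joined by an edge of the ancestral triangle. -/
def IsEdgeAT (a : List ℕ) (u w : ℕ) : Prop :=
  (u = 0 ∧ w = 1) ∨ (u = 1 ∧ w = 0) ∨
    (2 ≤ u ∧ (w = (edgeIdx a (u - 2)).1 ∨ w = (edgeIdx a (u - 2)).2)) ∨
    (2 ≤ w ∧ (u = (edgeIdx a (w - 2)).1 ∨ u = (edgeIdx a (w - 2)).2))

/-- A step of a path: an edge of the ancestral triangle along which the denominator of the
vertex label strictly decreases. -/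
def IsStep (a : List ℕ) (u w : ℕ) : Prop :=
  IsEdgeAT a u w ∧ (vtxLabel a w).2 < (vtxLabel a u).2

/-- `IsPathFrom a s γ` : `γ` is a path of the ancestral triangle of `a` starting at the
vertex with index `s` and ending at `0/1` or `1/1`, the denominator of the label strictly
decreasing along every edge. -/
def IsPathFrom (a : List ℕ) (s : ℕ) (γ : List ℕ) : Prop :=
  γ.head? = some s ∧ (γ.getLast? = some 0 ∨ γ.getLast? = some 1) ∧ List.Chain' (IsStep a) γ

/-- The (indices of the) triangles cut off to the left of the path by a single step from
vertex `u` down to vertex `w`. -/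
def stepLeft (a : List ℕ) (u w : ℕ) : Finset ℕ :=
  if 2 ≤ u ∧ w = (edgeIdx a (u - 2)).2 then Finset.Ioc (w - 1) (u - 1) else ∅

/-- The set `S_γ` of (indices of) triangles lying on the left side of the path `γ`. -/
def pathLeftSet (a : List ℕ) (γ : List ℕ) : Finset ℕ :=
  (γ.zip γ.tail).foldr (fun p s => stepLeft a p.1 p.2 ∪ s) ∅



private lemma ell_mirror (a1 : ℕ) (rest : List ℕ) (h2 : 2 ≤ a1) (k : ℕ) :
    ell (1 :: (a1 - 1) :: rest) (k + 2) = ell (a1 :: rest) (k + 1) := by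
  simp [ell]
  omega

private lemma fanIdx_mirror (a1 : ℕ) (rest : List ℕ) (h2 : 2 ≤ a1) (i : ℕ)
    (h1 : 1 ≤ i) (hi : i < (a1 :: rest).sum) :
    fanIdx (1 :: (a1 - 1) :: rest) i = fanIdx (a1 :: rest) i + 1 := by
  set a := a1 :: rest with ha
  set b := 1 :: (a1 - 1) :: rest with hb
  have hfull : ell a (rest.length + 1) = a.sum := by
    simp [ell, ha]
  have hne : {k | i < ell a k}.Nonempty := ⟨rest.length + 1, by simp [hfull, hi]⟩
  have hmem : i < ell a (fanIdx a i) := Nat.sInf_mem hne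
  have hmin : ∀ k, k < fanIdx a i → ¬ i < ell a k := by
    intro k hk
    have := Nat.notMem_of_lt_sInf (s := {k | i < ell a k}) hk
    simpa using this
  have hf1 : 1 ≤ fanIdx a i := by
    by_contra h
    have : fanIdx a i = 0 := by omega
    rw [this] at hmem
    simp [ell] at hmem
  obtain ⟨f, hf⟩ : ∃ f, fanIdx a i = f + 1 := ⟨fanIdx a i - 1, by omega⟩
  have hmemb : i < ell b (f + 2) := by
    rw [ell_mirror a1 rest h2, ← hf]; exact hmem
  have hlow : ∀ k, k < f + 2 → ¬ i < ell b k := by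
    intro k hk
    match k with
    | 0 => simp [ell]
    | 1 => simp [ell, hb]; omega
    | (j+2) =>
      rw [ell_mirror a1 rest h2]
      exact hmin (j + 1) (by omega)
  have hle : fanIdx b i ≤ f + 2 := Nat.sInf_le hmemb
  have hge : f + 2 ≤ fanIdx b i := by
    by_contra h
    have hm : i < ell b (fanIdx b i) := by
      have := Nat.sInf_mem (s := {k | i < ell b k}) ⟨f + 2, hmemb⟩
      exact this
    exact hlow _ (by omega) hm
  omega

private lemma isRight_mirror (a1 : ℕ) (rest : List ℕ) (h2 : 2 ≤ a1) (i : ℕ)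
    (h1 : 1 ≤ i) (hi : i < (a1 :: rest).sum) :
    isRight (1 :: (a1 - 1) :: rest) i ↔ ¬ isRight (a1 :: rest) i := by
  unfold isRight
  rw [fanIdx_mirror a1 rest h2 i h1 hi, Nat.odd_add_one]

private lemma edgeLbl_mirror (a1 : ℕ) (rest : List ℕ) (h2 : 2 ≤ a1) :
    ∀ i, i + 1 < (a1 :: rest).sum →
      edgeLbl (1 :: (a1 - 1) :: rest) i =
        (((edgeLbl (a1 :: rest) i).2.2 - (edgeLbl (a1 :: rest) i).2.1,
          (edgeLbl (a1 :: rest) i).2.2),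
         ((edgeLbl (a1 :: rest) i).1.2 - (edgeLbl (a1 :: rest) i).1.1,
          (edgeLbl (a1 :: rest) i).1.2)) ∧
      (edgeLbl (a1 :: rest) i).1.1 ≤ (edgeLbl (a1 :: rest) i).1.2 ∧
      (edgeLbl (a1 :: rest) i).2.1 ≤ (edgeLbl (a1 :: rest) i).2.2 := by
  intro i
  induction i with
  | zero => intro _; simp [edgeLbl]
  | succ i ih =>
    intro hi
    obtain ⟨heq, h11, h22⟩ := ih (by omega)
    have hflip := isRight_mirror a1 rest h2 (i + 1) (by omega) (by omega)
    by_cases hr : isRight (a1 :: rest) (i + 1)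
    · have hnb : ¬ isRight (1 :: (a1 - 1) :: rest) (i + 1) := by
        rw [hflip]; simp [hr]
      simp only [edgeLbl, if_pos hr, if_neg hnb, heq]
      refine ⟨?_, by omega, by omega⟩
      simp only [Prod.mk.injEq]
      and_intros <;> first | trivial | omega
    · have hnb : isRight (1 :: (a1 - 1) :: rest) (i + 1) := by
        rw [hflip]; exact hr
      simp only [edgeLbl, if_neg hr, if_pos hnb, heq]
      refine ⟨?_, by omega, by omega⟩
      simp only [Prod.mk.injEq]
      and_intros <;> first | trivial | omega

/-- **Proposition (labels of the mirror image).**  Let `p/q = [a₁,…,aₙ]` be an irreducible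
fraction with `0 < p/q < 1` and `a₁ ≥ 2`, so that `AT((q−p)/q)`, the ancestral triangle of
`[1, a₁−1, a₂,…,aₙ]`, is the mirror image of `AT(p/q)`; the mirror correspondence
exchanges the two bottom vertices `0/1` (index 0) and `1/1` (index 1) and matches the new
vertex of the `i`-th triangle of one ancestral triangle (index `i + 1`) with the new
vertex of the `i`-th triangle of the other.  Then the vertex of `AT((q−p)/q)`
corresponding to a vertex of `AT(p/q)` labeled `r/s` is labeled `(s−r)/s`. -/
theorem mirror_labels (a1 : ℕ) (rest : List ℕ) (p q : ℕ)
    (h2 : 2 ≤ a1) (hpos : ∀ x ∈ rest, 0 < x)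
    (hp : 0 < p) (hlt : p < q) (hcop : Nat.Coprime p q)
    (hval : cf (a1 :: rest) = (p : ℚ) / q) :
    (vtxLabel (1 :: (a1 - 1) :: rest) 1 =
        ((vtxLabel (a1 :: rest) 0).2 - (vtxLabel (a1 :: rest) 0).1,
          (vtxLabel (a1 :: rest) 0).2)) ∧
    (vtxLabel (1 :: (a1 - 1) :: rest) 0 =
        ((vtxLabel (a1 :: rest) 1).2 - (vtxLabel (a1 :: rest) 1).1,
          (vtxLabel (a1 :: rest) 1).2)) ∧
    ∀ i, 1 ≤ i → i ≤ (a1 :: rest).sum - 1 →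
      vtxLabel (1 :: (a1 - 1) :: rest) (i + 1) =
        ((vtxLabel (a1 :: rest) (i + 1)).2 - (vtxLabel (a1 :: rest) (i + 1)).1,
          (vtxLabel (a1 :: rest) (i + 1)).2) := by
  refine ⟨by simp [vtxLabel], by simp [vtxLabel], ?_⟩
  intro i h1 hN
  have hsum : 2 ≤ (a1 :: rest).sum := by simp [List.sum_cons]; omega
  obtain ⟨j, rfl⟩ : ∃ j, i = j + 1 := ⟨i - 1, by omega⟩
  obtain ⟨heq, h11, h22⟩ := edgeLbl_mirror a1 rest h2 j (by
    simp [List.sum_cons] at hN ⊢; omega)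
  simp only [vtxLabel]
  norm_num
  rw [show j + 1 + 1 - 2 = j by omega, heq]
  simp only [Prod.mk.injEq]
  omega


end TwoBridge

end
end

section
/- Write F[a_1,…,a_n] for the F-polynomial F_{p/q} when p/q = [a_1,…,a_n], with N = a_1 + ⋯ + a_n − 1 and l_k = a_1 + ⋯ + a_k. Then: (i) F[a_1,…,a_{n−1}, a_n − 1, 1] = F[a_1,…,a_n]; and (ii) if a_n ≥ 2, F[a_1,…,a_n] = F[a_1,…,a_{n−1}] + y_N · F[a_1,…,a_{n−1}, a_n − 1] if n is odd, and F[a_1,…,a_n] = (Π_{i=l_{n−1}}^{N} y_i) · F[a_1,…,a_{n−1}] + F[a_1,…,a_{n−1}, a_n − 1] if n is even. -/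
/-!
Ancestral triangles of continued fractions (Yamada / Farey diagrams),
following "Cluster variables and Alexander polynomials of 2-bridge knots".
-/

noncomputable section

open scoped BigOperators

attribute [local instance] Classical.propDecidable

namespace TwoBridge

/-- The `F`-polynomial `F_{p/q} = Σ_{γ ∈ Γ_{p/q}} ∏_{T_i ∈ S_γ} y_i` of `p/q = [a₁,…,aₙ]`
(the variable `y_i` is `MvPolynomial.X i`; the top vertex has index `a.sum = N + 1`).
For the empty continued fraction this gives `1`. -/
def Fpoly (a : List ℕ) : MvPolynomial ℕ ℤ :=
  ∑ᶠ γ ∈ {γ : List ℕ | IsPathFrom a a.sum γ},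
    ∏ i ∈ pathLeftSet a γ, (MvPolynomial.X i : MvPolynomial ℕ ℤ)

/-- `F`-polynomial with the convention `F[a₁,…,a_{n−1},0] = F[a₁,…,a_{n−2}]`. -/
def FpolyC (l : List ℕ) : MvPolynomial ℕ ℤ :=
  if l.getLast? = some 0 then Fpoly l.dropLast.dropLast else Fpoly l

lemma edgeIdx_le (a : List ℕ) (i : ℕ) : (edgeIdx a i).1 ≤ i + 1 ∧ (edgeIdx a i).2 ≤ i + 1 := by
  induction i with
  | zero => simp [edgeIdx]
  | succ n ih =>
    rw [edgeIdx]
    split <;> constructor <;> simp <;> omega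

lemma edgeIdx_ne (a : List ℕ) (i : ℕ) : (edgeIdx a i).1 ≠ (edgeIdx a i).2 := by
  induction i with
  | zero => simp [edgeIdx]
  | succ n ih =>
    have h := edgeIdx_le a n
    rw [edgeIdx]
    split <;> simp <;> omega

lemma edgeLbl_denom_pos (a : List ℕ) (i : ℕ) :
    1 ≤ (edgeLbl a i).1.2 ∧ 1 ≤ (edgeLbl a i).2.2 := by
  induction i with
  | zero => simp [edgeLbl]
  | succ n ih =>
    rw [edgeLbl]
    split <;> simp <;> omega

lemma vtxLabel_two (a : List ℕ) (v : ℕ) : vtxLabel a (v + 2) =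
    ((edgeLbl a v).1.1 + (edgeLbl a v).2.1, (edgeLbl a v).1.2 + (edgeLbl a v).2.2) := by
  simp [vtxLabel]

lemma vtxLabel_edge (a : List ℕ) (i : ℕ) :
    vtxLabel a (edgeIdx a i).1 = (edgeLbl a i).1 ∧
    vtxLabel a (edgeIdx a i).2 = (edgeLbl a i).2 := by
  induction i with
  | zero => constructor <;> simp [edgeIdx, edgeLbl, vtxLabel]
  | succ n ih =>
    rw [edgeIdx, edgeLbl]
    by_cases h : isRight a (n + 1)
    · rw [if_pos h, if_pos h]
      exact ⟨ih.1, vtxLabel_two a n⟩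
    · rw [if_neg h, if_neg h]
      exact ⟨vtxLabel_two a n, ih.2⟩

lemma isStep_iff (a : List ℕ) (u w : ℕ) :
    IsStep a u w ↔ 2 ≤ u ∧ (w = (edgeIdx a (u - 2)).1 ∨ w = (edgeIdx a (u - 2)).2) := by
  constructor
  · rintro ⟨hedge, hlt⟩
    rcases hedge with ⟨hu, hw⟩ | ⟨hu, hw⟩ | h | ⟨hw, hu⟩
    · subst hu; subst hw; simp [vtxLabel] at hlt
    · subst hu; subst hw; simp [vtxLabel] at hlt
    · exact h
    · exfalso
      obtain ⟨k, hk⟩ : ∃ k, w = k + 2 := ⟨w - 2, by omega⟩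
      subst hk
      have hve := vtxLabel_edge a k
      have hd := edgeLbl_denom_pos a k
      rw [vtxLabel_two] at hlt
      simp only [Nat.add_sub_cancel] at hu
      rcases hu with hu | hu <;> rw [hu] at hlt
      · rw [hve.1] at hlt; simp at hlt
      · rw [hve.2] at hlt; simp at hlt
  · rintro ⟨hu, hw⟩
    obtain ⟨k, hk⟩ : ∃ k, u = k + 2 := ⟨u - 2, by omega⟩
    subst hk
    simp only [Nat.add_sub_cancel] at hw ⊢
    refine ⟨Or.inr (Or.inr (Or.inl ⟨by omega, by simpa using hw⟩)), ?_⟩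
    have hve := vtxLabel_edge a k
    have hd := edgeLbl_denom_pos a k
    rw [vtxLabel_two]
    rcases hw with hw | hw <;> rw [hw]
    · rw [hve.1]; omega
    · rw [hve.2]; omega

lemma pathLeftSet_single (a : List ℕ) (u : ℕ) : pathLeftSet a [u] = ∅ := rfl

lemma pathLeftSet_cons (a : List ℕ) (u w : ℕ) (t : List ℕ) :
    pathLeftSet a (u :: w :: t) = stepLeft a u w ∪ pathLeftSet a (w :: t) := rfl

lemma head_eq_of_path {a : List ℕ} {s : ℕ} {γ : List ℕ} (h : IsPathFrom a s γ) :
    ∃ t, γ = s :: t := by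
  obtain ⟨h1, -, -⟩ := h
  cases γ with
  | nil => simp at h1
  | cons x t => simp at h1; exact ⟨t, by rw [h1]⟩

lemma isPathFrom_low (a : List ℕ) (s : ℕ) (hs : s ≤ 1) (γ : List ℕ) :
    IsPathFrom a s γ ↔ γ = [s] := by
  constructor
  · intro h
    obtain ⟨t, rfl⟩ := head_eq_of_path h
    cases t with
    | nil => rfl
    | cons w t' =>
      exfalso
      have hstep : IsStep a s w := (List.isChain_cons_cons.1 h.2.2).1
      have := (isStep_iff a s w).1 hstep
      omega
  · rintro rfl
    refine ⟨rfl, ?_, List.isChain_singleton _⟩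
    interval_cases s <;> simp

lemma isPathFrom_cons (a : List ℕ) (s : ℕ) (hs : 2 ≤ s) (γ : List ℕ) :
    IsPathFrom a s γ ↔ ∃ w γ', γ = s :: w :: γ' ∧
      (w = (edgeIdx a (s - 2)).1 ∨ w = (edgeIdx a (s - 2)).2) ∧ IsPathFrom a w (w :: γ') := by
  constructor
  · intro h
    obtain ⟨t, rfl⟩ := head_eq_of_path h
    cases t with
    | nil =>
      exfalso
      rcases h.2.1 with h' | h' <;> simp at h' <;> omega
    | cons w γ' =>
      have hstep : IsStep a s w := (List.isChain_cons_cons.1 h.2.2).1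
      refine ⟨w, γ', rfl, ((isStep_iff a s w).1 hstep).2, rfl, ?_, (List.isChain_cons_cons.1 h.2.2).2⟩
      rcases h.2.1 with h' | h' <;> rw [List.getLast?_cons_cons] at h'
      · exact Or.inl h'
      · exact Or.inr h'
  · rintro ⟨w, γ', rfl, hw, hp⟩
    refine ⟨rfl, ?_, List.isChain_cons_cons.2 ⟨(isStep_iff a s w).2 ⟨hs, hw⟩, hp.2.2⟩⟩
    rcases hp.2.1 with h' | h' <;> rw [List.getLast?_cons_cons]
    · exact Or.inl h'
    · exact Or.inr h'

lemma pathSet_finite (a : List ℕ) (s : ℕ) : {γ : List ℕ | IsPathFrom a s γ}.Finite := by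
  induction s using Nat.strong_induction_on with
  | _ s ih =>
    rcases le_or_gt s 1 with h | h
    · refine Set.Finite.subset (Set.finite_singleton [s]) ?_
      intro γ hγ
      exact (isPathFrom_low a s h γ).1 hγ
    · have hle := edgeIdx_le a (s - 2)
      refine Set.Finite.subset ((((ih (edgeIdx a (s-2)).1 (by omega)).union
        (ih (edgeIdx a (s-2)).2 (by omega))).image (List.cons s)) ) ?_
      intro γ hγ
      obtain ⟨w, γ', rfl, hw, hp⟩ := (isPathFrom_cons a s (by omega) γ).1 hγ
      rcases hw with hw | hw <;> subst hw
      · exact ⟨_, Or.inl hp, rfl⟩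
      · exact ⟨_, Or.inr hp, rfl⟩

lemma pathLeftSet_subset (a : List ℕ) (s : ℕ) (γ : List ℕ) (h : IsPathFrom a s γ) :
    pathLeftSet a γ ⊆ Finset.range s := by
  induction s using Nat.strong_induction_on generalizing γ with
  | _ s ih =>
    rcases le_or_gt s 1 with hs | hs
    · rw [(isPathFrom_low a s hs γ).1 h, pathLeftSet_single]
      exact Finset.empty_subset _
    · have hle := edgeIdx_le a (s - 2)
      obtain ⟨w, γ', rfl, hw, hp⟩ := (isPathFrom_cons a s (by omega) γ).1 h
      rw [pathLeftSet_cons]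
      have hw' : w ≤ s - 1 := by rcases hw with hw | hw <;> omega
      refine Finset.union_subset ?_ ?_
      · intro x hx
        rw [stepLeft] at hx
        split at hx
        · simp only [Finset.mem_Ioc] at hx
          simp only [Finset.mem_range]
          omega
        · simp at hx
      · refine subset_trans (ih w (by omega) _ hp) ?_
        intro x hx
        simp only [Finset.mem_range] at hx ⊢
        omega
def FS (a : List ℕ) (s : ℕ) : MvPolynomial ℕ ℤ :=
  ∑ᶠ γ ∈ {γ : List ℕ | IsPathFrom a s γ},
    ∏ i ∈ pathLeftSet a γ, (MvPolynomial.X i : MvPolynomial ℕ ℤ)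

lemma FS_low (a : List ℕ) (s : ℕ) (hs : s ≤ 1) : FS a s = 1 := by
  have h : {γ : List ℕ | IsPathFrom a s γ} = {[s]} := by
    ext γ; exact isPathFrom_low a s hs γ
  rw [FS, h, finsum_mem_singleton, pathLeftSet_single, Finset.prod_empty]

lemma FS_rec (a : List ℕ) (s : ℕ) (hs : 2 ≤ s) :
    FS a s = FS a (edgeIdx a (s - 2)).1 +
      (∏ i ∈ Finset.Ioc ((edgeIdx a (s - 2)).2 - 1) (s - 1),
        (MvPolynomial.X i : MvPolynomial ℕ ℤ)) * FS a (edgeIdx a (s - 2)).2 := by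
  set e1 := (edgeIdx a (s - 2)).1 with he1
  set e2 := (edgeIdx a (s - 2)).2 with he2
  have hne : e1 ≠ e2 := edgeIdx_ne a (s - 2)
  set P1 := {γ : List ℕ | IsPathFrom a e1 γ} with hP1
  set P2 := {γ : List ℕ | IsPathFrom a e2 γ} with hP2
  have hset : {γ : List ℕ | IsPathFrom a s γ} = (List.cons s) '' (P1 ∪ P2) := by
    ext γ
    simp only [Set.mem_setOf_eq, Set.mem_image, Set.mem_union]
    constructor
    · intro h
      obtain ⟨w, γ', rfl, hw, hp⟩ := (isPathFrom_cons a s hs γ).1 h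
      rcases hw with hw | hw <;> subst hw
      · exact ⟨_, Or.inl hp, rfl⟩
      · exact ⟨_, Or.inr hp, rfl⟩
    · rintro ⟨δ, hδ, rfl⟩
      rcases hδ with hδ | hδ <;> obtain ⟨t, rfl⟩ := head_eq_of_path hδ
      · exact (isPathFrom_cons a s hs _).2 ⟨e1, t, rfl, Or.inl rfl, hδ⟩
      · exact (isPathFrom_cons a s hs _).2 ⟨e2, t, rfl, Or.inr rfl, hδ⟩
  have hdisj : Disjoint P1 P2 := by
    rw [Set.disjoint_left]
    intro γ h1 h2
    obtain ⟨t, rfl⟩ := head_eq_of_path h1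
    obtain ⟨t', ht'⟩ := head_eq_of_path h2
    apply hne
    simpa using congrArg List.head? ht'
  have hinj : Set.InjOn (List.cons s) (P1 ∪ P2) := fun x _ y _ h => by simpa using h
  rw [FS, hset, finsum_mem_image hinj, finsum_mem_union hdisj (pathSet_finite a e1) (pathSet_finite a e2)]
  congr 1
  · -- over P1
    rw [FS]
    apply finsum_mem_congr rfl
    intro γ hγ
    obtain ⟨t, rfl⟩ := head_eq_of_path hγ
    rw [pathLeftSet_cons]
    have : stepLeft a s e1 = ∅ := by
      rw [stepLeft, if_neg]
      rintro ⟨-, h⟩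
      exact hne h
    rw [this, Finset.empty_union]
  · -- over P2
    have hstep : stepLeft a s e2 = Finset.Ioc (e2 - 1) (s - 1) := by
      rw [stepLeft, if_pos ⟨hs, rfl⟩]
    have hcong : ∀ γ ∈ P2,
        (∏ i ∈ pathLeftSet a (s :: γ), (MvPolynomial.X i : MvPolynomial ℕ ℤ)) =
        (∏ i ∈ Finset.Ioc (e2 - 1) (s - 1), (MvPolynomial.X i : MvPolynomial ℕ ℤ)) *
          ∏ i ∈ pathLeftSet a γ, (MvPolynomial.X i : MvPolynomial ℕ ℤ) := by
      intro γ hγ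
      obtain ⟨t, rfl⟩ := head_eq_of_path hγ
      rw [pathLeftSet_cons, hstep]
      apply Finset.prod_union
      have hsub := pathLeftSet_subset a e2 _ hγ
      rw [Finset.disjoint_left]
      intro x hx1 hx2
      have := hsub hx2
      simp only [Finset.mem_range] at this
      simp only [Finset.mem_Ioc] at hx1
      omega
    rw [finsum_mem_congr rfl hcong, FS,
      finsum_mem_eq_finite_toFinset_sum _ (pathSet_finite a e2),
      finsum_mem_eq_finite_toFinset_sum _ (pathSet_finite a e2), Finset.mul_sum]
lemma FS_congr (a b : List ℕ) (s : ℕ) (h : ∀ i, i + 2 ≤ s → edgeIdx a i = edgeIdx b i) :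
    FS a s = FS b s := by
  induction s using Nat.strong_induction_on with
  | _ s ih =>
    rcases le_or_gt s 1 with hs | hs
    · rw [FS_low a s hs, FS_low b s hs]
    · have he := h (s - 2) (by omega)
      have hle := edgeIdx_le a (s - 2)
      rw [FS_rec a s (by omega), FS_rec b s (by omega), ← he]
      have h1 := ih (edgeIdx a (s-2)).1 (by omega) (fun i hi => h i (by omega))
      have h2 := ih (edgeIdx a (s-2)).2 (by omega) (fun i hi => h i (by omega))
      rw [h1, h2]

lemma fanIdx_congr (a b : List ℕ) (j : ℕ) (h : ∀ k, j < ell a k ↔ j < ell b k) :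
    fanIdx a j = fanIdx b j := by
  unfold fanIdx
  congr 1
  ext k
  exact h k

lemma edgeIdx_congr (a b : List ℕ) (i : ℕ) (h : ∀ j, j ≤ i → fanIdx a j = fanIdx b j) :
    edgeIdx a i = edgeIdx b i := by
  induction i with
  | zero => rfl
  | succ n ih =>
    have hr : isRight a (n + 1) ↔ isRight b (n + 1) := by
      unfold isRight; rw [h (n+1) le_rfl]
    rw [edgeIdx, edgeIdx, ih (fun j hj => h j (by omega))]
    by_cases hh : isRight a (n + 1)
    · rw [if_pos hh, if_pos (hr.1 hh)]
    · rw [if_neg hh, if_neg (fun hb => hh (hr.2 hb))]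

lemma ell_append (as t : List ℕ) (k : ℕ) :
    ell (as ++ t) k = ell as k + ell t (k - as.length) := by
  unfold ell
  rw [List.take_append, List.sum_append]

lemma ell_mono (l : List ℕ) : Monotone (ell l) := by
  apply monotone_nat_of_le_succ
  intro k
  unfold ell
  rw [List.take_succ, List.sum_append]
  omega

lemma ell_le_sum (l : List ℕ) (k : ℕ) : ell l k ≤ l.sum := by
  conv_rhs => rw [← List.take_append_drop k l]
  rw [List.sum_append]
  exact Nat.le_add_right _ _

lemma ell_of_length_le (l : List ℕ) (k : ℕ) (h : l.length ≤ k) : ell l k = l.sum := by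
  unfold ell
  rw [List.take_of_length_le h]

lemma ell_length (l : List ℕ) : ell l l.length = l.sum := ell_of_length_le l _ le_rfl

lemma fanIdx_eq (l : List ℕ) (j k : ℕ) (hk : 1 ≤ k) (h1 : ell l (k - 1) ≤ j)
    (h2 : j < ell l k) : fanIdx l j = k := by
  have hmem : k ∈ {k' | j < ell l k'} := h2
  rw [fanIdx]
  refine le_antisymm (Nat.sInf_le hmem) (le_csInf ⟨k, hmem⟩ ?_)
  intro m hm
  rw [Set.mem_setOf_eq] at hm
  by_contra hmk
  have : ell l m ≤ ell l (k - 1) := ell_mono l (by omega)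
  have : j < ell l m := hm
  omega

lemma length_le_sum_of_pos (l : List ℕ) (hpos : ∀ x ∈ l, 0 < x) : l.length ≤ l.sum := by
  induction l with
  | nil => simp
  | cons x t ih =>
    simp only [List.length_cons, List.sum_cons]
    have := hpos x (by simp)
    have := ih (fun y hy => hpos y (by simp [hy]))
    omega
lemma fanIdx_last (as : List ℕ) (an j : ℕ) (h1 : as.sum ≤ j) (h2 : j < as.sum + an) :
    fanIdx (as ++ [an]) j = as.length + 1 := by
  apply fanIdx_eq _ _ _ (by omega)
  · simp only [Nat.add_sub_cancel]
    rw [ell_append, ell_length, Nat.sub_self]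
    simpa [ell] using h1
  · rw [ell_append, ell_of_length_le as _ (by omega), Nat.add_sub_cancel_left]
    have : ell [an] 1 = an := by simp [ell]
    omega

lemma fanIdx_pred (as t : List ℕ) (hne : as ≠ []) (hpos : ∀ x ∈ as, 0 < x) :
    fanIdx (as ++ t) (as.sum - 1) = as.length := by
  have hlen : 1 ≤ as.length := by
    cases as with
    | nil => exact absurd rfl hne
    | cons x l => simp
  have hsum : 1 ≤ as.sum := le_trans hlen (length_le_sum_of_pos as hpos)
  apply fanIdx_eq _ _ _ hlen
  · rw [ell_append]
    have hz : as.length - 1 - as.length = 0 := by omega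
    have h0 : ell t 0 = 0 := by simp [ell]
    rw [hz, h0, Nat.add_zero]
    have hlast := List.dropLast_append_getLast hne
    have hsum2 : as.dropLast.sum + as.getLast hne = as.sum := by
      conv_rhs => rw [← hlast]
      rw [List.sum_append]
      simp
    have hpos2 : 0 < as.getLast hne := hpos _ (List.getLast_mem hne)
    have : ell as (as.length - 1) = as.dropLast.sum := by
      unfold ell
      rw [← List.dropLast_eq_take]
    omega
  · rw [ell_append, Nat.sub_self]
    have h0 : ell t 0 = 0 := by simp [ell]
    rw [h0, Nat.add_zero, ell_length]
    omega

lemma edgeIdx_fst_const (a : List ℕ) (c i : ℕ) (hci : c ≤ i)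
    (h : ∀ j, c < j → j ≤ i → isRight a j) : (edgeIdx a i).1 = (edgeIdx a c).1 := by
  induction i, hci using Nat.le_induction with
  | base => rfl
  | succ n hn ih =>
    rw [edgeIdx, if_pos (h (n + 1) (by omega) le_rfl)]
    exact ih (fun j h1 h2 => h j h1 (by omega))

lemma edgeIdx_snd_const (a : List ℕ) (c i : ℕ) (hci : c ≤ i)
    (h : ∀ j, c < j → j ≤ i → ¬ isRight a j) : (edgeIdx a i).2 = (edgeIdx a c).2 := by
  induction i, hci using Nat.le_induction with
  | base => rfl
  | succ n hn ih =>
    rw [edgeIdx, if_neg (h (n + 1) (by omega) le_rfl)]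
    exact ih (fun j h1 h2 => h j h1 (by omega))

lemma edgeIdx_top_odd (as : List ℕ) (an : ℕ) (hpos : ∀ x ∈ as, 0 < x) (han : 2 ≤ an)
    (hodd : (as.length + 1) % 2 = 1) :
    edgeIdx (as ++ [an]) (as.sum + an - 2) = (as.sum, as.sum + an - 1) := by
  set a := as ++ [an] with ha
  set L := as.sum with hL
  have hfan : ∀ j, L ≤ j → j ≤ L + an - 2 → isRight a j := by
    intro j h1 h2
    unfold isRight
    rw [fanIdx_last as an j h1 (by omega), Nat.odd_iff]
    exact hodd
  have hfst2 : (edgeIdx a (L - 1)).1 = L := by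
    rcases Nat.eq_zero_or_pos L with hL0 | hL0
    · rw [hL0]; simp [edgeIdx]
    · have hne : as ≠ [] := by
        intro h; rw [h] at hL; simp at hL; omega
      have hlen : 1 ≤ as.length := by
        cases as with
        | nil => exact absurd rfl hne
        | cons x l => simp
      have hlen2 : 2 ≤ as.length := by
        rcases Nat.lt_or_ge as.length 2 with h | h
        · interval_cases h' : as.length <;> omega
        · exact h
      have hL2 : 2 ≤ L := le_trans hlen2 (length_le_sum_of_pos as hpos)
      have hnr : ¬ isRight a (L - 1) := by
        unfold isRight
        rw [fanIdx_pred as [an] hne hpos, Nat.odd_iff]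
        omega
      have hidx : L - 1 = (L - 2) + 1 := by omega
      rw [hidx] at hnr ⊢
      rw [edgeIdx, if_neg hnr]
      simp; omega
  have hfst : (edgeIdx a (L + an - 2)).1 = L := by
    rw [edgeIdx_fst_const a (L - 1) (L + an - 2) (by omega)
      (fun j h1 h2 => hfan j (by omega) h2), hfst2]
  have hsnd : (edgeIdx a (L + an - 2)).2 = L + an - 1 := by
    rcases Nat.eq_zero_or_pos (L + an - 2) with h0 | h0
    · rw [h0]; simp [edgeIdx]; omega
    · have hidx : L + an - 2 = (L + an - 3) + 1 := by omega
      rw [hidx, edgeIdx, if_pos (by rw [← hidx]; exact hfan _ (by omega) le_rfl)]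
      simp; omega
  exact Prod.ext hfst hsnd

lemma edgeIdx_top_even (as : List ℕ) (an : ℕ) (hpos : ∀ x ∈ as, 0 < x) (han : 2 ≤ an)
    (heven : (as.length + 1) % 2 = 0) :
    edgeIdx (as ++ [an]) (as.sum + an - 2) = (as.sum + an - 1, as.sum) := by
  set a := as ++ [an] with ha
  set L := as.sum with hL
  have hne : as ≠ [] := by
    intro h; rw [h] at heven; simp at heven
  have hlen : 1 ≤ as.length := by
    cases as with
    | nil => exact absurd rfl hne
    | cons x l => simp
  have hL1 : 1 ≤ L := le_trans hlen (length_le_sum_of_pos as hpos)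
  have hfan : ∀ j, L ≤ j → j ≤ L + an - 2 → ¬ isRight a j := by
    intro j h1 h2
    unfold isRight
    rw [fanIdx_last as an j h1 (by omega), Nat.odd_iff]
    omega
  have hsnd2 : (edgeIdx a (L - 1)).2 = L := by
    rcases Nat.lt_or_ge L 2 with hL0 | hL0
    · have : L = 1 := by omega
      rw [this]; simp [edgeIdx]
    · have hr : isRight a (L - 1) := by
        unfold isRight
        rw [fanIdx_pred as [an] hne hpos, Nat.odd_iff]
        omega
      have hidx : L - 1 = (L - 2) + 1 := by omega
      rw [hidx] at hr ⊢
      rw [edgeIdx, if_pos hr]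
      simp; omega
  have hsnd : (edgeIdx a (L + an - 2)).2 = L := by
    rw [edgeIdx_snd_const a (L - 1) (L + an - 2) (by omega)
      (fun j h1 h2 => hfan j (by omega) h2), hsnd2]
  have hfst : (edgeIdx a (L + an - 2)).1 = L + an - 1 := by
    have hidx : L + an - 2 = (L + an - 3) + 1 := by omega
    rw [hidx, edgeIdx, if_neg (by rw [← hidx]; exact hfan _ (by omega) le_rfl)]
    simp; omega
  exact Prod.ext hfst hsnd
lemma ell_singleton_pos (x m : ℕ) (hm : 1 ≤ m) : ell [x] m = x := by
  have := ell_of_length_le [x] m (by simpa using hm)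
  simpa using this

lemma fan_agree_drop (as : List ℕ) (an j : ℕ) (hj : j < as.sum) :
    fanIdx (as ++ [an]) j = fanIdx as j := by
  apply fanIdx_congr
  intro k
  rw [ell_append]
  rcases le_or_gt k as.length with h | h
  · have hz : k - as.length = 0 := by omega
    rw [hz]
    simp [ell]
  · rw [ell_of_length_le as k (by omega)]
    have := ell_of_length_le as k (by omega)
    constructor <;> intro <;> omega

lemma fan_agree_pred (as : List ℕ) (an j : ℕ) (han : 2 ≤ an) (hj : j ≤ as.sum + an - 2) :
    fanIdx (as ++ [an]) j = fanIdx (as ++ [an - 1]) j := by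
  apply fanIdx_congr
  intro k
  rw [ell_append, ell_append]
  rcases le_or_gt k as.length with h | h
  · have hz : k - as.length = 0 := by omega
    rw [hz]
    simp [ell]
  · rw [ell_singleton_pos an (k - as.length) (by omega), ell_singleton_pos (an - 1) (k - as.length) (by omega),
      ell_of_length_le as k (by omega)]
    omega

lemma ell_pair (x y m : ℕ) (hm : 2 ≤ m) : ell [x, y] m = x + y := by
  have := ell_of_length_le [x, y] m (by simpa using hm)
  simpa using this

lemma fan_agree_two (as : List ℕ) (an j : ℕ) (han : 2 ≤ an) (hj : j ≤ as.sum + an - 2) :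
    fanIdx (as ++ [an]) j = fanIdx (as ++ [an - 1, 1]) j := by
  apply fanIdx_congr
  intro k
  rw [ell_append, ell_append]
  rcases le_or_gt k as.length with h | h
  · have hz : k - as.length = 0 := by omega
    rw [hz]
    simp [ell]
  · rw [ell_singleton_pos an (k - as.length) (by omega), ell_of_length_le as k (by omega)]
    rcases eq_or_lt_of_le (by omega : as.length + 1 ≤ k) with h2 | h2
    · have h1 : k - as.length = 1 := by omega
      rw [h1]
      have : ell [an - 1, 1] 1 = an - 1 := by simp [ell]
      omega
    · rw [ell_pair (an - 1) 1 (k - as.length) (by omega)]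
      omega

theorem F_polynomial_recursion' (as : List ℕ) (an : ℕ)
    (hpos : ∀ x ∈ as, 0 < x) (han : 0 < an) :
    (2 ≤ an → FS (as ++ [an - 1, 1]) (as ++ [an - 1, 1]).sum = FS (as ++ [an]) (as ++ [an]).sum) ∧
    (2 ≤ an → Odd (as.length + 1) →
      FS (as ++ [an]) (as ++ [an]).sum =
        FS as as.sum +
          MvPolynomial.X ((as ++ [an]).sum - 1) * FS (as ++ [an - 1]) (as ++ [an - 1]).sum) ∧
    (2 ≤ an → Even (as.length + 1) →
      FS (as ++ [an]) (as ++ [an]).sum =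
        (∏ i ∈ Finset.Icc as.sum ((as ++ [an]).sum - 1),
            (MvPolynomial.X i : MvPolynomial ℕ ℤ)) * FS as as.sum +
          FS (as ++ [an - 1]) (as ++ [an - 1]).sum) := by
  set L := as.sum with hLdef
  have hsum2 : (as ++ [an]).sum = L + an := by simp [hLdef]
  refine ⟨?_, ?_, ?_⟩
  · intro h2
    have hsum1 : (as ++ [an - 1, 1]).sum = L + an := by simp; omega
    rw [hsum1, hsum2]
    apply FS_congr
    intro i hi
    apply edgeIdx_congr
    intro j hj
    exact (fan_agree_two as an j (by omega) (by omega)).symm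
  · intro h2 hodd
    have hoddm : (as.length + 1) % 2 = 1 := Nat.odd_iff.1 hodd
    have hsum3 : (as ++ [an - 1]).sum = L + an - 1 := by simp; omega
    rw [hsum2, hsum3, FS_rec _ _ (by omega)]
    have hidx : L + an - 2 = L + an - 2 := rfl
    rw [show L + an - 2 = (as.sum + an - 2) from rfl, edgeIdx_top_odd as an hpos h2 hoddm]
    simp only [Prod.fst, Prod.snd]
    have hioc : Finset.Ioc (L + an - 1 - 1) (L + an - 1) = {L + an - 1} := by
      ext x
      simp only [Finset.mem_Ioc, Finset.mem_singleton]
      omega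
    rw [hioc, Finset.prod_singleton]
    congr 1
    · apply FS_congr
      intro i hi
      apply edgeIdx_congr
      intro j hj
      exact fan_agree_drop as an j (by omega)
    · congr 1
      apply FS_congr
      intro i hi
      apply edgeIdx_congr
      intro j hj
      exact fan_agree_pred as an j (by omega) (by omega)
  · intro h2 heven
    have hevenm : (as.length + 1) % 2 = 0 := Nat.even_iff.1 heven
    have hlen : 1 ≤ as.length := by
      rcases as with _ | ⟨x, l⟩
      · simp at hevenm
      · simp
    have hL1 : 1 ≤ L := le_trans hlen (length_le_sum_of_pos as hpos)
    have hsum3 : (as ++ [an - 1]).sum = L + an - 1 := by simp; omega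
    rw [hsum2, hsum3, FS_rec _ _ (by omega)]
    rw [show L + an - 2 = (as.sum + an - 2) from rfl, edgeIdx_top_even as an hpos h2 hevenm]
    simp only [Prod.fst, Prod.snd]
    have hioc : Finset.Ioc (L - 1) (L + an - 1) = Finset.Icc L (L + an - 1) := by
      ext x
      simp only [Finset.mem_Ioc, Finset.mem_Icc]
      omega
    rw [hioc, add_comm]
    congr 1
    · congr 1
      apply FS_congr
      intro i hi
      apply edgeIdx_congr
      intro j hj
      exact fan_agree_drop as an j (by omega)
    · apply FS_congr
      intro i hi
      apply edgeIdx_congr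
      intro j hj
      exact fan_agree_pred as an j (by omega) (by omega)

lemma Fpoly_eq_FS (a : List ℕ) : Fpoly a = FS a a.sum := rfl

/-- **Corollary (recursions of F-polynomials).**  Write `F[a₁,…,aₙ]` for the
`F`-polynomial `F_{p/q}` when `p/q = [a₁,…,aₙ]`, with `N = a₁ + ⋯ + aₙ − 1` and
`l_k = a₁ + ⋯ + a_k`.  Then (i) `F[a₁,…,a_{n−1}, aₙ − 1, 1] = F[a₁,…,aₙ]`; and (ii) if
`aₙ ≥ 2`, `F[a₁,…,aₙ] = F[a₁,…,a_{n−1}] + y_N · F[a₁,…,a_{n−1}, aₙ − 1]` if `n` is odd,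
and `F[a₁,…,aₙ] = (∏_{i=l_{n−1}}^{N} y_i) · F[a₁,…,a_{n−1}] + F[a₁,…,a_{n−1}, aₙ − 1]`
if `n` is even.  (Here the list of the first `n − 1` entries is `as`, and `aₙ = an`.) -/
theorem F_polynomial_recursion (as : List ℕ) (an : ℕ)
    (hpos : ∀ x ∈ as, 0 < x) (han : 0 < an) :
    (2 ≤ an → Fpoly (as ++ [an - 1, 1]) = Fpoly (as ++ [an])) ∧
    (2 ≤ an → Odd (as.length + 1) →
      Fpoly (as ++ [an]) =
        Fpoly as +
          MvPolynomial.X ((as ++ [an]).sum - 1) * Fpoly (as ++ [an - 1])) ∧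
    (2 ≤ an → Even (as.length + 1) →
      Fpoly (as ++ [an]) =
        (∏ i ∈ Finset.Icc as.sum ((as ++ [an]).sum - 1),
            (MvPolynomial.X i : MvPolynomial ℕ ℤ)) * Fpoly as +
          Fpoly (as ++ [an - 1])) := by
  simpa only [Fpoly_eq_FS] using F_polynomial_recursion' as an hpos han

end TwoBridge

end
end
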